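/- Let L be a locally compact Hausdorff space, Y a real Banach space, E a closed subspace of C_b(L,Y), and E₀ = E ∩ C₀(L,Y). If the closed unit ball of E₀ is dense in the closed unit ball of E for the topology of uniform convergence on compact subsets of L, then E₀ is an M-ideal in E. -/

import Mathlib

/-- A subset `E₀` of a Banach space `E` is an *M-ideal* in `E` if there is a bounded linear
projection `P` on the dual `E*` whose kernel is the annihilator of `E₀` and which satisfies
`‖φ‖ = ‖P φ‖ + ‖φ - P φ‖` for every `φ ∈ E*`. -/
def IsMIdeal {E : Type*} [NormedAddCommGroup E] [NormedSpace ℝ E] (E₀ : Set E) : Prop :=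
  ∃ P : (E →L[ℝ] ℝ) →L[ℝ] (E →L[ℝ] ℝ),
    (∀ φ, P (P φ) = P φ) ∧
    (∀ φ, P φ = 0 ↔ ∀ y ∈ E₀, φ y = 0) ∧
    (∀ φ, ‖φ‖ = ‖P φ‖ + ‖φ - P φ‖)

/-- A bounded continuous function vanishes at infinity if `{t | ε ≤ ‖f t‖}` is compact
for every `ε > 0`. -/
def ZeroAtInfty {L Y : Type*} [TopologicalSpace L] [NormedAddCommGroup Y]
    (f : BoundedContinuousFunction L Y) : Prop :=
  ∀ ε > (0 : ℝ), IsCompact {t : L | ε ≤ ‖f t‖}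

namespace MIdealProof
open BoundedContinuousFunction Set Filter Topology TopologicalSpace

set_option linter.unusedSectionVars false
set_option linter.unusedTactic false
set_option maxHeartbeats 4000000

variable {L Y : Type*} [TopologicalSpace L] [NormedAddCommGroup Y] [NormedSpace ℝ Y]

lemma zai_isClosed (f : BoundedContinuousFunction L Y) (ε : ℝ) :
    IsClosed {t : L | ε ≤ ‖f t‖} :=
  isClosed_le continuous_const (f.continuous.norm)

lemma zai_zero : ZeroAtInfty (0 : BoundedContinuousFunction L Y) := by
  intro ε hε
  convert isCompact_empty
  ext t
  simp [not_le, hε]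

lemma zai_neg {f : BoundedContinuousFunction L Y} (hf : ZeroAtInfty f) :
    ZeroAtInfty (-f) := by
  intro ε hε
  convert hf ε hε using 2
  ext t; simp

lemma zai_add {f g : BoundedContinuousFunction L Y} (hf : ZeroAtInfty f)
    (hg : ZeroAtInfty g) : ZeroAtInfty (f + g) := by
  intro ε hε
  have h2 : (0:ℝ) < ε/2 := by positivity
  refine IsCompact.of_isClosed_subset ((hf (ε/2) h2).union (hg (ε/2) h2))
    (zai_isClosed _ _) ?_
  intro t ht
  simp only [mem_setOf_eq, coe_add, Pi.add_apply] at ht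
  by_contra hc
  simp only [mem_union, mem_setOf_eq, not_or, not_le] at hc
  have := norm_add_le (f t) (g t)
  linarith [hc.1, hc.2, ht]

lemma zai_sub {f g : BoundedContinuousFunction L Y} (hf : ZeroAtInfty f)
    (hg : ZeroAtInfty g) : ZeroAtInfty (f - g) := by
  rw [sub_eq_add_neg]; exact zai_add hf (zai_neg hg)

lemma zai_smul (c : ℝ) {f : BoundedContinuousFunction L Y} (hf : ZeroAtInfty f) :
    ZeroAtInfty (c • f) := by
  rcases eq_or_ne c 0 with rfl | hc
  · simpa using (zai_zero (L := L) (Y := Y))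
  intro ε hε
  have hcpos : (0:ℝ) < |c| := abs_pos.mpr hc
  refine IsCompact.of_isClosed_subset (hf (ε/|c|) (by positivity)) (zai_isClosed _ _) ?_
  intro t ht
  simp only [mem_setOf_eq, coe_smul, Pi.smul_apply, norm_smul, Real.norm_eq_abs] at ht ⊢
  rw [div_le_iff₀ hcpos]
  linarith [ht]

lemma zai_sum {ι : Type*} (s : Finset ι) (f : ι → BoundedContinuousFunction L Y)
    (h : ∀ i ∈ s, ZeroAtInfty (f i)) : ZeroAtInfty (∑ i ∈ s, f i) := by
  classical
  induction s using Finset.induction_on with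
  | empty => simpa using (zai_zero (L := L) (Y := Y))
  | insert _ _ hni ih =>
    rw [Finset.sum_insert hni]
    exact zai_add (h _ (Finset.mem_insert_self _ _))
      (ih fun i hi => h i (Finset.mem_insert_of_mem hi))


variable {E : Submodule ℝ (BoundedContinuousFunction L Y)}

lemma strongDense
    (hdense : ∀ f ∈ E, ‖f‖ ≤ 1 → ∀ K : Set L, IsCompact K → ∀ ε > (0 : ℝ),
      ∃ g ∈ E, ZeroAtInfty g ∧ ‖g‖ ≤ 1 ∧ ∀ t ∈ K, ‖f t - g t‖ ≤ ε)
    (f : BoundedContinuousFunction L Y) (hfE : f ∈ E) (hf1 : ‖f‖ ≤ 1)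
    (K : Set L) (hK : IsCompact K) (ε : ℝ) (hε : 0 < ε) :
    ∃ z ∈ E, ZeroAtInfty z ∧ ‖z‖ ≤ 1 ∧ (∀ t ∈ K, ‖f t - z t‖ ≤ ε) ∧ ‖f - z‖ ≤ 1 + ε := by
  classical
  set δ : ℝ := ε/2 with hδdef
  have hδ : 0 < δ := by positivity
  -- the choice function
  choose pick hpickE hpickZ hpickN hpickA using
    fun S : Compacts L => hdense f hfE hf1 S.1 S.2 δ hδ
  -- the recursive sequence of compacts
  set KS : ℕ → Compacts L := fun m => Nat.rec ⟨K, hK⟩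
    (fun _ S => S ⊔ ⟨{t | δ ≤ ‖pick S t‖}, hpickZ S δ hδ⟩) m with hKSdef
  have hKSsucc : ∀ i, KS (i+1) = KS i ⊔ ⟨{t | δ ≤ ‖pick (KS i) t‖}, hpickZ (KS i) δ hδ⟩ :=
    fun i => rfl
  have hmono : Monotone KS := monotone_nat_of_le_succ (by
    intro i; rw [hKSsucc]; exact le_sup_left)
  have hKsub : ∀ i, K ⊆ (KS i).1 := by
    intro i
    have : KS 0 ≤ KS i := hmono (Nat.zero_le i)
    exact fun t ht => this ht
  set z : ℕ → BoundedContinuousFunction L Y := fun i => pick (KS i) with hzdef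
  have hout : ∀ i t, t ∉ (KS (i+1)).1 → ‖z i t‖ < δ := by
    intro i t ht
    by_contra hc
    push_neg at hc
    apply ht
    rw [hKSsucc]
    exact le_sup_right (a := KS i) (Set.mem_setOf_eq ▸ hc)
  have hf_t : ∀ t, ‖f t‖ ≤ 1 := fun t => le_trans (norm_coe_le_norm f t) hf1
  -- choose n
  obtain ⟨n, hn⟩ : ∃ n : ℕ, 0 < n ∧ 1/(n:ℝ) ≤ ε/2 := by
    obtain ⟨n, hn⟩ := exists_nat_gt (2/ε)
    refine ⟨n, ?_, ?_⟩
    · by_contra h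
      push_neg at h
      interval_cases n
      · simp at hn; linarith [div_pos (by norm_num : (0:ℝ) < 2) hε]
    · rw [div_le_iff₀ (by exact_mod_cast Nat.pos_of_ne_zero (by rintro rfl; simp at hn; linarith [div_pos (by norm_num : (0:ℝ) < 2) hε])), mul_comm]
      rw [div_lt_iff₀ hε] at hn
      nlinarith
  obtain ⟨hn0, hn2⟩ := hn
  have hnR : (0:ℝ) < n := by exact_mod_cast hn0
  set zb : BoundedContinuousFunction L Y := (n:ℝ)⁻¹ • ∑ i ∈ Finset.range n, z i with hzb
  have hzbE : zb ∈ E := Submodule.smul_mem _ _ (Submodule.sum_mem _ fun i _ => hpickE _)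
  have hzbZ : ZeroAtInfty zb := zai_smul _ (zai_sum _ _ fun i _ => hpickZ _)
  -- identity for f - zb
  have hid : f - zb = (n:ℝ)⁻¹ • ∑ i ∈ Finset.range n, (f - z i) := by
    rw [Finset.sum_sub_distrib, smul_sub, Finset.sum_const, Finset.card_range,
      ← Nat.cast_smul_eq_nsmul ℝ, smul_smul, inv_mul_cancel₀ (ne_of_gt hnR), one_smul, hzb]
  -- per point estimate off K
  have hbound : ∀ t, ‖(f - zb) t‖ ≤ 1 + δ + 1/n := by
    intro t
    set m : ℕ := sInf {j | t ∈ (KS (j+1)).1} with hm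
    have hterm : ∀ i, i ≠ m → ‖f t - z i t‖ ≤ 1 + δ := by
      intro i him
      by_cases hti : t ∈ (KS (i+1)).1
      · have hne : {j | t ∈ (KS (j+1)).1}.Nonempty := ⟨i, hti⟩
        have hmmem : t ∈ (KS (m+1)).1 := Nat.sInf_mem hne
        have hmi : m ≤ i := Nat.sInf_le hti
        have : m + 1 ≤ i := Nat.succ_le_of_lt (lt_of_le_of_ne hmi (fun h => him h.symm))
        have : t ∈ (KS i).1 := hmono this hmmem
        calc ‖f t - z i t‖ ≤ δ := hpickA (KS i) t this
        _ ≤ 1 + δ := by linarith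
      · have := hout i t hti
        calc ‖f t - z i t‖ ≤ ‖f t‖ + ‖z i t‖ := norm_sub_le _ _
        _ ≤ 1 + δ := by linarith [hf_t t]
    have hsum : ∑ i ∈ Finset.range n, ‖f t - z i t‖ ≤ (1 + δ) * n + 1 := by
      have h1 : ∀ i ∈ Finset.range n, ‖f t - z i t‖ ≤ (1 + δ) + (if i = m then 1 else 0) := by
        intro i _
        by_cases him : i = m
        · simp only [him, if_pos rfl]
          calc ‖f t - z m t‖ ≤ ‖f t‖ + ‖z m t‖ := norm_sub_le _ _
          _ ≤ 1 + δ + 1 := by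
              have := hpickN (KS m)
              have := le_trans (norm_coe_le_norm (z m) t) this
              linarith [hf_t t, hδ.le]
        · simp only [if_neg him]
          simpa using hterm i him
      calc ∑ i ∈ Finset.range n, ‖f t - z i t‖
          ≤ ∑ i ∈ Finset.range n, ((1 + δ) + (if i = m then 1 else 0)) :=
            Finset.sum_le_sum h1
        _ = (1 + δ) * n + ∑ i ∈ Finset.range n, (if i = m then (1:ℝ) else 0) := by
            rw [Finset.sum_add_distrib, Finset.sum_const, Finset.card_range, nsmul_eq_mul,
              mul_comm]
        _ ≤ (1 + δ) * n + 1 := by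
            rw [Finset.sum_ite_eq' (Finset.range n) m (fun _ => (1:ℝ))]
            split <;> norm_num
    rw [hid]
    calc ‖((n:ℝ)⁻¹ • ∑ i ∈ Finset.range n, (f - z i)) t‖
        = (n:ℝ)⁻¹ * ‖(∑ i ∈ Finset.range n, (f - z i)) t‖ := by
          simp [norm_smul, abs_of_pos (inv_pos.mpr hnR)]
      _ ≤ (n:ℝ)⁻¹ * ∑ i ∈ Finset.range n, ‖f t - z i t‖ := by
          apply mul_le_mul_of_nonneg_left _ (inv_pos.mpr hnR).le
          calc ‖(∑ i ∈ Finset.range n, (f - z i)) t‖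
              = ‖∑ i ∈ Finset.range n, (f t - z i t)‖ := by
                congr 1
                induction (Finset.range n) using Finset.induction_on with
                | empty => simp
                | insert _ _ h ih => simp [Finset.sum_insert h, ih]
            _ ≤ ∑ i ∈ Finset.range n, ‖f t - z i t‖ := norm_sum_le _ _
      _ ≤ (n:ℝ)⁻¹ * ((1 + δ) * n + 1) := by
          apply mul_le_mul_of_nonneg_left hsum (inv_pos.mpr hnR).le
      _ = 1 + δ + 1/n := by field_simp
  refine ⟨zb, hzbE, hzbZ, ?_, ?_, ?_⟩
  · -- ‖zb‖ ≤ 1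
    rw [norm_le zero_le_one]
    intro t
    calc ‖zb t‖ = (n:ℝ)⁻¹ * ‖(∑ i ∈ Finset.range n, z i) t‖ := by
          simp [hzb, norm_smul, abs_of_pos (inv_pos.mpr hnR)]
      _ ≤ (n:ℝ)⁻¹ * ∑ i ∈ Finset.range n, ‖z i t‖ := by
          apply mul_le_mul_of_nonneg_left _ (inv_pos.mpr hnR).le
          calc ‖(∑ i ∈ Finset.range n, z i) t‖
              = ‖∑ i ∈ Finset.range n, z i t‖ := by
                congr 1
                induction (Finset.range n) using Finset.induction_on with
                | empty => simp
                | insert _ _ h ih => simp [Finset.sum_insert h, ih]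
            _ ≤ ∑ i ∈ Finset.range n, ‖z i t‖ := norm_sum_le _ _
      _ ≤ (n:ℝ)⁻¹ * ∑ i ∈ Finset.range n, 1 := by
          apply mul_le_mul_of_nonneg_left _ (inv_pos.mpr hnR).le
          exact Finset.sum_le_sum fun i _ =>
            le_trans (norm_coe_le_norm (z i) t) (hpickN (KS i))
      _ ≤ 1 := by
          simp only [Finset.sum_const, Finset.card_range, nsmul_eq_mul, mul_one]
          rw [inv_mul_le_iff₀ hnR]; simp
  · -- on K within ε
    intro t ht
    have : ∀ i ∈ Finset.range n, ‖f t - z i t‖ ≤ δ := fun i _ => hpickA (KS i) t (hKsub i ht)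
    have h1 : ‖(f - zb) t‖ ≤ (n:ℝ)⁻¹ * (n * δ) := by
      rw [hid]
      calc ‖((n:ℝ)⁻¹ • ∑ i ∈ Finset.range n, (f - z i)) t‖
          = (n:ℝ)⁻¹ * ‖(∑ i ∈ Finset.range n, (f - z i)) t‖ := by
            simp [norm_smul, abs_of_pos (inv_pos.mpr hnR)]
        _ ≤ (n:ℝ)⁻¹ * (n * δ) := by
            apply mul_le_mul_of_nonneg_left _ (inv_pos.mpr hnR).le
            calc ‖(∑ i ∈ Finset.range n, (f - z i)) t‖
                = ‖∑ i ∈ Finset.range n, (f t - z i t)‖ := by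
                  congr 1
                  induction (Finset.range n) using Finset.induction_on with
                  | empty => simp
                  | insert _ _ h ih => simp [Finset.sum_insert h, ih]
              _ ≤ ∑ i ∈ Finset.range n, ‖f t - z i t‖ := norm_sum_le _ _
              _ ≤ ∑ i ∈ Finset.range n, δ := Finset.sum_le_sum this
              _ = n * δ := by simp [Finset.sum_const, Finset.card_range, nsmul_eq_mul]
    have h2 : (n:ℝ)⁻¹ * (n * δ) = δ := by field_simp
    have h3 : ‖f t - zb t‖ = ‖(f - zb) t‖ := by simp
    rw [h3]
    calc ‖(f - zb) t‖ ≤ δ := by rw [← h2]; exact h1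
      _ ≤ ε := by rw [hδdef]; linarith
  · -- global bound
    rw [norm_le (by linarith)]
    intro t
    calc ‖(f - zb) t‖ ≤ 1 + δ + 1/n := hbound t
      _ ≤ 1 + ε := by rw [hδdef]; linarith


lemma strongDense'
    (hdense : ∀ f ∈ E, ‖f‖ ≤ 1 → ∀ K : Set L, IsCompact K → ∀ ε > (0 : ℝ),
      ∃ g ∈ E, ZeroAtInfty g ∧ ‖g‖ ≤ 1 ∧ ∀ t ∈ K, ‖f t - g t‖ ≤ ε)
    (f : ↥E) (K : Set L) (hK : IsCompact K) (ε : ℝ) (hε : 0 < ε) :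
    ∃ z : ↥E, ZeroAtInfty (z : BoundedContinuousFunction L Y) ∧ ‖z‖ ≤ ‖f‖ ∧
      (∀ t ∈ K, ‖(f : BoundedContinuousFunction L Y) t -
        (z : BoundedContinuousFunction L Y) t‖ ≤ ε) ∧
      ‖(f : BoundedContinuousFunction L Y) - (z : BoundedContinuousFunction L Y)‖ ≤ ‖f‖ + ε := by
  by_cases hf0 : ‖f‖ = 0
  · have hf0' : (f : BoundedContinuousFunction L Y) = 0 := by
      have : ‖(f : BoundedContinuousFunction L Y)‖ = 0 := by rw [Submodule.norm_coe]; exact hf0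
      exact norm_eq_zero.mp this
    refine ⟨0, ?_, ?_, ?_, ?_⟩
    · rw [Submodule.coe_zero]; exact zai_zero
    · simp [hf0]
    · intro t _; simp [hf0']; linarith
    · simp [hf0', hf0]; linarith
  · have hr : 0 < ‖f‖ := lt_of_le_of_ne (norm_nonneg f) (Ne.symm hf0)
    set r : ℝ := ‖f‖ with hrdef
    have hrc : ‖(f : BoundedContinuousFunction L Y)‖ = r := Submodule.norm_coe f
    set g : BoundedContinuousFunction L Y := r⁻¹ • (f : BoundedContinuousFunction L Y) with hg
    have hgE : g ∈ E := Submodule.smul_mem _ _ f.2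
    have hg1 : ‖g‖ ≤ 1 := by
      rw [hg, norm_smul, Real.norm_eq_abs, abs_of_pos (inv_pos.mpr hr), hrc,
        inv_mul_cancel₀ (ne_of_gt hr)]
    obtain ⟨z', hz'E, hz'Z, hz'N, hz'A, hz'G⟩ :=
      strongDense hdense g hgE hg1 K hK (ε/r) (by positivity)
    have hfg : (f : BoundedContinuousFunction L Y) = r • g := by
      rw [hg, smul_smul, mul_inv_cancel₀ (ne_of_gt hr), one_smul]
    refine ⟨⟨r • z', Submodule.smul_mem _ _ hz'E⟩, ?_, ?_, ?_, ?_⟩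
    · exact zai_smul r hz'Z
    · have h1 : ‖r • z'‖ ≤ r := by
        rw [norm_smul, Real.norm_eq_abs, abs_of_pos hr]
        calc r * ‖z'‖ ≤ r * 1 := mul_le_mul_of_nonneg_left hz'N hr.le
          _ = r := mul_one r
      calc ‖(⟨r • z', Submodule.smul_mem _ _ hz'E⟩ : ↥E)‖
          = ‖r • z'‖ := (Submodule.norm_coe _).symm
        _ ≤ r := h1
        _ = ‖f‖ := hrc.symm
    · intro t ht
      show ‖(f : BoundedContinuousFunction L Y) t - (r • z') t‖ ≤ ε
      rw [hfg]
      have : (r • g) t - (r • z') t = r • (g t - z' t) := by simp [smul_sub]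
      rw [this, norm_smul, Real.norm_eq_abs, abs_of_pos hr]
      calc r * ‖g t - z' t‖ ≤ r * (ε/r) := mul_le_mul_of_nonneg_left (hz'A t ht) hr.le
        _ = ε := by field_simp
    · show ‖(f : BoundedContinuousFunction L Y) - r • z'‖ ≤ ‖f‖ + ε
      rw [hfg, ← smul_sub, norm_smul, Real.norm_eq_abs, abs_of_pos hr]
      calc r * ‖g - z'‖ ≤ r * (1 + ε/r) := mul_le_mul_of_nonneg_left hz'G hr.le
        _ = ‖f‖ + ε := by field_simp; rw [hrdef]

lemma tight (φ : ↥E →L[ℝ] ℝ) {C ε : ℝ} (hC : 0 < C) (hε : 0 < ε) :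
    ∃ K : Compacts L, ∃ δ : ℝ, 0 < δ ∧ ∀ h : ↥E,
      ZeroAtInfty (h : BoundedContinuousFunction L Y) → ‖h‖ ≤ C →
      (∀ t ∈ K.1, ‖(h : BoundedContinuousFunction L Y) t‖ ≤ δ) → |φ h| ≤ ε := by
  classical
  by_contra hcon
  push_neg at hcon
  have H2 : ∀ (S : Compacts L) (n : ℕ), ∃ h : ↥E,
      ZeroAtInfty (h : BoundedContinuousFunction L Y) ∧ ‖h‖ ≤ C ∧
      (∀ t ∈ S.1, ‖(h : BoundedContinuousFunction L Y) t‖ ≤ C/2^(n+1)) ∧ ε < φ h := by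
    intro S n
    obtain ⟨h, h1, h2, h3, h4⟩ := hcon S (C/2^(n+1)) (by positivity)
    by_cases hs : 0 ≤ φ h
    · exact ⟨h, h1, h2, h3, by rwa [abs_of_nonneg hs] at h4⟩
    · refine ⟨-h, ?_, ?_, ?_, ?_⟩
      · rw [Submodule.coe_neg]; exact zai_neg h1
      · rwa [norm_neg]
      · intro t ht
        rw [Submodule.coe_neg]
        simpa using h3 t ht
      · rw [map_neg]
        rwa [abs_of_neg (not_le.mp hs)] at h4
  choose pick hz hb hsm hlb using H2
  set KS : ℕ → Compacts L := fun m => Nat.rec ⊥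
    (fun n S => S ⊔ ⟨{t | C/2^(n+1) ≤ ‖(pick S n : BoundedContinuousFunction L Y) t‖},
      hz S n (C/2^(n+1)) (by positivity)⟩) m with hKSdef
  set h : ℕ → ↥E := fun i => pick (KS i) i with hhdef
  have hKSsucc : ∀ i, KS (i+1) = KS i ⊔
      ⟨{t | C/2^(i+1) ≤ ‖(h i : BoundedContinuousFunction L Y) t‖},
        hz (KS i) i (C/2^(i+1)) (by positivity)⟩ := fun i => rfl
  have hmono : Monotone KS := monotone_nat_of_le_succ (by
    intro i; rw [hKSsucc]; exact le_sup_left)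
  have hout : ∀ i t, t ∉ (KS (i+1)).1 →
      ‖(h i : BoundedContinuousFunction L Y) t‖ < C/2^(i+1) := by
    intro i t ht
    by_contra hc
    push_neg at hc
    apply ht
    rw [hKSsucc]
    exact le_sup_right (a := KS i) (Set.mem_setOf_eq ▸ hc)
  -- pointwise bound for partial sums
  have hptw : ∀ (N : ℕ) (t : L),
      ∑ i ∈ Finset.range N, ‖(h i : BoundedContinuousFunction L Y) t‖ ≤ C + C := by
    intro N t
    set m : ℕ := sInf {j | t ∈ (KS (j+1)).1} with hm
    have hterm : ∀ i, i ≠ m → ‖(h i : BoundedContinuousFunction L Y) t‖ ≤ C/2^(i+1) := by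
      intro i him
      by_cases hti : t ∈ (KS (i+1)).1
      · have hne : {j | t ∈ (KS (j+1)).1}.Nonempty := ⟨i, hti⟩
        have hmmem : t ∈ (KS (m+1)).1 := Nat.sInf_mem hne
        have hmi : m ≤ i := Nat.sInf_le hti
        have hsle : m + 1 ≤ i := Nat.succ_le_of_lt (lt_of_le_of_ne hmi fun a => him a.symm)
        exact hsm (KS i) i t (hmono hsle hmmem)
      · exact (hout i t hti).le
    have h1 : ∀ i ∈ Finset.range N, ‖(h i : BoundedContinuousFunction L Y) t‖ ≤
        C/2^(i+1) + (if i = m then C else 0) := by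
      intro i _
      by_cases him : i = m
      · rw [if_pos him]
        have hba : ‖(h i : BoundedContinuousFunction L Y) t‖ ≤ C :=
          le_trans (norm_coe_le_norm (h i : BoundedContinuousFunction L Y) t)
            (by rw [Submodule.norm_coe]; exact hb (KS i) i)
        have hpos : (0:ℝ) ≤ C/2^(i+1) := by positivity
        linarith
      · simp only [if_neg him]
        simpa using hterm i him
    calc ∑ i ∈ Finset.range N, ‖(h i : BoundedContinuousFunction L Y) t‖
        ≤ ∑ i ∈ Finset.range N, (C/2^(i+1) + (if i = m then C else 0)) :=
          Finset.sum_le_sum h1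
      _ = ∑ i ∈ Finset.range N, C/2^(i+1)
          + ∑ i ∈ Finset.range N, (if i = m then C else 0) := Finset.sum_add_distrib
      _ ≤ C + C := by
          gcongr
          · calc ∑ i ∈ Finset.range N, C/2^(i+1)
                = (C/2) * ∑ i ∈ Finset.range N, (1/2:ℝ)^i := by
                  rw [Finset.mul_sum]
                  apply Finset.sum_congr rfl
                  intro i _
                  rw [pow_succ, one_div, inv_pow]
                  ring
              _ ≤ (C/2) * 2 := by
                  apply mul_le_mul_of_nonneg_left (sum_geometric_two_le N) (by positivity)
              _ = C := by ring
          · rw [Finset.sum_ite_eq' (Finset.range N) m (fun _ => C)]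
            split <;> simp [hC.le]
  -- contradiction
  obtain ⟨N, hN⟩ := exists_nat_gt (‖φ‖ * (C + C) / ε)
  have hN1 : 0 < N := by
    rcases Nat.eq_zero_or_pos N with rfl | hp
    · exfalso
      simp only [Nat.cast_zero] at hN
      have : 0 ≤ ‖φ‖ * (C + C) / ε := by positivity
      linarith
    · exact hp
  set SN : ↥E := ∑ i ∈ Finset.range N, h i with hSN
  have hSNnorm : ‖SN‖ ≤ C + C := by
    rw [← Submodule.norm_coe]
    have hcoe : (SN : BoundedContinuousFunction L Y)
        = ∑ i ∈ Finset.range N, (h i : BoundedContinuousFunction L Y) := by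
      simp [hSN]
    rw [hcoe, norm_le (by positivity)]
    intro t
    calc ‖(∑ i ∈ Finset.range N, (h i : BoundedContinuousFunction L Y)) t‖
        = ‖∑ i ∈ Finset.range N, (h i : BoundedContinuousFunction L Y) t‖ := by
          congr 1
          induction (Finset.range N) using Finset.induction_on with
          | empty => simp
          | insert _ _ hni ih => simp [Finset.sum_insert hni, ih]
      _ ≤ ∑ i ∈ Finset.range N, ‖(h i : BoundedContinuousFunction L Y) t‖ := norm_sum_le _ _
      _ ≤ C + C := hptw N t
  have hsum : (N : ℝ) * ε < φ SN := by
    rw [hSN, map_sum]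
    have : ∑ _i ∈ Finset.range N, ε < ∑ i ∈ Finset.range N, φ (h i) :=
      Finset.sum_lt_sum_of_nonempty (Finset.nonempty_range_iff.mpr hN1.ne') fun i _ => hlb (KS i) i
    simpa [mul_comm] using this
  have : φ SN ≤ ‖φ‖ * (C + C) := by
    calc φ SN ≤ |φ SN| := le_abs_self _
      _ ≤ ‖φ‖ * ‖SN‖ := φ.le_opNorm SN
      _ ≤ ‖φ‖ * (C + C) := mul_le_mul_of_nonneg_left hSNnorm (norm_nonneg φ)
  rw [div_lt_iff₀ hε] at hN
  linarith


theorem main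
    (hdense : ∀ f ∈ E, ‖f‖ ≤ 1 → ∀ K : Set L, IsCompact K → ∀ ε > (0 : ℝ),
      ∃ g ∈ E, ZeroAtInfty g ∧ ‖g‖ ≤ 1 ∧ ∀ t ∈ K, ‖f t - g t‖ ≤ ε) :
    IsMIdeal {f : ↥E | ZeroAtInfty (f : BoundedContinuousFunction L Y)} := by
  classical
  haveI : Nonempty (Compacts L) := ⟨⊥⟩
  -- inverse step sizes
  have hstep : ∀ n : ℕ, (0:ℝ) < 1/(n+1) := fun n => by positivity
  -- choice of compactly-approximating elements
  choose G hGz hGn hGa hGg using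
    fun (f : ↥E) (d : Compacts L × ℕ) =>
      strongDense' hdense f d.1.1 d.1.2 (1/(d.2+1)) (hstep d.2)
  -- step size comparison
  have hstep2 : ∀ {n₀ n : ℕ} {δ : ℝ}, 0 < δ → 1/((n₀:ℝ)+1) ≤ δ → n₀ ≤ n → 1/((n:ℝ)+1) ≤ δ := by
    intro n₀ n δ hδ h₁ hn
    refine le_trans (one_div_le_one_div_of_le (by positivity) ?_) h₁
    have : (n₀:ℝ) ≤ n := by exact_mod_cast hn
    linarith
  have hstepfind : ∀ δ : ℝ, 0 < δ → ∃ n₀ : ℕ, 1/((n₀:ℝ)+1) ≤ δ := by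
    intro δ hδ
    refine ⟨⌈1/δ⌉₊, ?_⟩
    rw [div_le_iff₀ (by positivity)]
    have h1 : δ * (1/δ) ≤ δ * (⌈1/δ⌉₊:ℝ) := mul_le_mul_of_nonneg_left (Nat.le_ceil _) hδ.le
    have h2 : δ * (1/δ) = 1 := mul_one_div_cancel hδ.ne'
    have h3 : δ * ((⌈1/δ⌉₊:ℝ)+1) = δ * (⌈1/δ⌉₊:ℝ) + δ := by ring
    linarith
  -- uniform small-division helper
  have hsmalldiv : ∀ {c δ : ℝ}, 0 ≤ c → 0 < δ → ∃ n₀ : ℕ, ∀ n : ℕ, n₀ ≤ n →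
      c/((n:ℝ)+1) ≤ δ := by
    intro c δ hc hδ
    obtain ⟨n₀, h⟩ := hstepfind (δ/(c+1)) (by positivity)
    refine ⟨n₀, fun n hn => ?_⟩
    have h2 : 1/((n:ℝ)+1) ≤ δ/(c+1) := hstep2 (by positivity) h hn
    have h3 : c/((n:ℝ)+1) = c * (1/((n:ℝ)+1)) := by ring
    rw [h3]
    calc c * (1/((n:ℝ)+1)) ≤ c * (δ/(c+1)) := mul_le_mul_of_nonneg_left h2 hc
      _ ≤ δ := by
          rw [mul_div_assoc', div_le_iff₀ (by positivity : (0:ℝ) < c + 1)]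
          nlinarith
  -- key tendsto-zero lemma
  have key : ∀ (φ : ↥E →L[ℝ] ℝ) (v : Compacts L × ℕ → ↥E) (C c : ℝ), 0 ≤ c →
      (∀ d, ZeroAtInfty ((v d : ↥E) : BoundedContinuousFunction L Y)) →
      (∀ d, ‖v d‖ ≤ C) →
      (∀ d, ∀ t ∈ (d.1 : Compacts L).1, ‖((v d : ↥E) : BoundedContinuousFunction L Y) t‖ ≤ 1*c/(d.2+1)) →
      Tendsto (fun d => φ (v d)) atTop (𝓝 0) := by
    intro φ v C c hc hvz hvb hvs
    rw [Metric.tendsto_atTop]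
    intro ε hε
    have hC1 : 0 < C + 1 := by
      have h1 := norm_nonneg (v (⊥, 0)); have h2 := hvb (⊥, 0); linarith
    obtain ⟨K₀, δ, hδ, hK₀⟩ := tight φ hC1 (half_pos hε)
    obtain ⟨n₀, hn₀⟩ := hsmalldiv hc hδ
    refine ⟨(K₀, n₀), fun d hd => ?_⟩
    have hb : |φ (v d)| ≤ ε/2 := by
      refine hK₀ (v d) (hvz d) (le_trans (hvb d) (by linarith)) ?_
      intro t ht
      have ht' : t ∈ (d.1 : Compacts L).1 := hd.1 ht
      calc ‖((v d : ↥E) : BoundedContinuousFunction L Y) t‖ ≤ 1*c/(d.2+1) := hvs d t ht'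
        _ = c/(d.2+1) := by rw [one_mul]
        _ ≤ δ := hn₀ d.2 hd.2
    rw [Real.dist_eq, sub_zero]
    linarith
  -- existence of limits
  have exlim : ∀ (φ : ↥E →L[ℝ] ℝ) (f : ↥E),
      ∃ x, Tendsto (fun d => φ (G f d)) atTop (𝓝 x) := by
    intro φ f
    apply cauchySeq_tendsto_of_complete
    rw [Metric.cauchySeq_iff]
    intro ε hε
    have hC1 : (0:ℝ) < 2*‖f‖ + 1 := by have := norm_nonneg f; linarith
    obtain ⟨K₀, δ, hδ, hK₀⟩ := tight φ hC1 (half_pos hε)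
    obtain ⟨n₀, hn₀⟩ := hsmalldiv (le_of_lt one_pos) (half_pos hδ)
    refine ⟨(K₀, n₀), fun m hm n hn => ?_⟩
    have hzsub : ZeroAtInfty ((G f m - G f n : ↥E) : BoundedContinuousFunction L Y) := by
      have : ((G f m - G f n : ↥E) : BoundedContinuousFunction L Y)
          = (G f m : BoundedContinuousFunction L Y) - (G f n : BoundedContinuousFunction L Y) := rfl
      rw [this]
      exact zai_sub (hGz f m) (hGz f n)
    have hnsub : ‖G f m - G f n‖ ≤ 2*‖f‖ + 1 := by
      have := norm_sub_le (G f m) (G f n)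
      have h1 := hGn f m; have h2 := hGn f n
      linarith
    have hsmall : ∀ t ∈ K₀.1,
        ‖((G f m - G f n : ↥E) : BoundedContinuousFunction L Y) t‖ ≤ δ := by
      intro t ht
      have htm : t ∈ (m.1 : Compacts L).1 := hm.1 ht
      have htn : t ∈ (n.1 : Compacts L).1 := hn.1 ht
      have e1 : ‖(f : BoundedContinuousFunction L Y) t
          - (G f m : BoundedContinuousFunction L Y) t‖ ≤ 1/(m.2+1) := hGa f m t htm
      have e2 : ‖(f : BoundedContinuousFunction L Y) t
          - (G f n : BoundedContinuousFunction L Y) t‖ ≤ 1/(n.2+1) := hGa f n t htn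
      have e3 : 1/((m.2:ℝ)+1) ≤ δ/2 := hn₀ m.2 hm.2
      have e4 : 1/((n.2:ℝ)+1) ≤ δ/2 := hn₀ n.2 hn.2
      have e5 : ((G f m - G f n : ↥E) : BoundedContinuousFunction L Y) t
          = (G f m : BoundedContinuousFunction L Y) t
            - (G f n : BoundedContinuousFunction L Y) t := rfl
      rw [e5]
      have := norm_sub_le ((f : BoundedContinuousFunction L Y) t
        - (G f n : BoundedContinuousFunction L Y) t)
        ((f : BoundedContinuousFunction L Y) t - (G f m : BoundedContinuousFunction L Y) t)
      have heq : ((f : BoundedContinuousFunction L Y) t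
          - (G f n : BoundedContinuousFunction L Y) t)
          - ((f : BoundedContinuousFunction L Y) t
            - (G f m : BoundedContinuousFunction L Y) t)
          = (G f m : BoundedContinuousFunction L Y) t
            - (G f n : BoundedContinuousFunction L Y) t := by abel
      rw [heq] at this
      linarith
    have := hK₀ (G f m - G f n) hzsub hnsub hsmall
    rw [Real.dist_eq, ← map_sub]
    linarith [abs_nonneg (φ (G f m - G f n))]
  choose Pf hPf using exlim
  haveI hNB : (atTop : Filter (Compacts L × ℕ)).NeBot := atTop_neBot
  -- F1 : P agrees with φ on E₀
  have F1 : ∀ (φ : ↥E →L[ℝ] ℝ) (f : ↥E), ZeroAtInfty (f : BoundedContinuousFunction L Y) →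
      Pf φ f = φ f := by
    intro φ f hf
    have h0 : Tendsto (fun d => φ (f - G f d)) atTop (𝓝 0) := by
      refine key φ (fun d => f - G f d) (2*‖f‖) 1 one_pos.le ?_ ?_ ?_
      · intro d
        have hc : ((f - G f d : ↥E) : BoundedContinuousFunction L Y)
            = (f : BoundedContinuousFunction L Y) - (G f d : BoundedContinuousFunction L Y) := rfl
        rw [hc]; exact zai_sub hf (hGz f d)
      · intro d
        have h1 := norm_sub_le f (G f d); have h2 := hGn f d; linarith
      · intro d t ht
        have hc : ((f - G f d : ↥E) : BoundedContinuousFunction L Y) t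
            = (f : BoundedContinuousFunction L Y) t
              - (G f d : BoundedContinuousFunction L Y) t := rfl
        rw [hc, one_mul]
        exact hGa f d t ht
    have h1 : Tendsto (fun d => φ (G f d)) atTop (𝓝 (φ f - 0)) := by
      have heq : (fun d => φ (G f d)) = fun d => φ f - φ (f - G f d) := by
        funext d; rw [map_sub]; ring
      rw [heq]
      exact tendsto_const_nhds.sub h0
    rw [sub_zero] at h1
    exact tendsto_nhds_unique (hPf φ f) h1
  -- F2 : additivity in f
  have F2 : ∀ (φ : ↥E →L[ℝ] ℝ) (f g : ↥E), Pf φ (f + g) = Pf φ f + Pf φ g := by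
    intro φ f g
    have h0 : Tendsto (fun d => φ (G (f+g) d - G f d - G g d)) atTop (𝓝 0) := by
      refine key φ _ (‖f+g‖ + ‖f‖ + ‖g‖) 3 (by norm_num) ?_ ?_ ?_
      · intro d
        have hc : ((G (f+g) d - G f d - G g d : ↥E) : BoundedContinuousFunction L Y)
            = ((G (f+g) d : BoundedContinuousFunction L Y)
                - (G f d : BoundedContinuousFunction L Y))
              - (G g d : BoundedContinuousFunction L Y) := rfl
        rw [hc]
        exact zai_sub (zai_sub (hGz _ _) (hGz _ _)) (hGz _ _)
      · intro d
        have h1 := hGn (f+g) d; have h2 := hGn f d; have h3 := hGn g d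
        have e1 := norm_sub_le (G (f+g) d - G f d) (G g d)
        have e2 := norm_sub_le (G (f+g) d) (G f d)
        linarith
      · intro d t ht
        have hc : ((G (f+g) d - G f d - G g d : ↥E) : BoundedContinuousFunction L Y) t
            = -(((f+g : ↥E) : BoundedContinuousFunction L Y) t
                  - (G (f+g) d : BoundedContinuousFunction L Y) t)
              + ((f : BoundedContinuousFunction L Y) t
                  - (G f d : BoundedContinuousFunction L Y) t)
              + ((g : BoundedContinuousFunction L Y) t
                  - (G g d : BoundedContinuousFunction L Y) t) := by
          have h1 : ((f+g : ↥E) : BoundedContinuousFunction L Y) t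
              = (f : BoundedContinuousFunction L Y) t
                + (g : BoundedContinuousFunction L Y) t := rfl
          have h2 : ((G (f+g) d - G f d - G g d : ↥E) : BoundedContinuousFunction L Y) t
              = (G (f+g) d : BoundedContinuousFunction L Y) t
                - (G f d : BoundedContinuousFunction L Y) t
                - (G g d : BoundedContinuousFunction L Y) t := rfl
          rw [h2, h1]
          abel
        rw [hc]
        have e1 := hGa (f+g) d t ht
        have e2 := hGa f d t ht
        have e3 := hGa g d t ht
        have harith : 1*3/((d.2:ℝ)+1) = 1/((d.2:ℝ)+1) + 1/((d.2:ℝ)+1) + 1/((d.2:ℝ)+1) := by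
          ring
        rw [harith]
        calc ‖-(((f+g : ↥E) : BoundedContinuousFunction L Y) t
                  - (G (f+g) d : BoundedContinuousFunction L Y) t)
              + ((f : BoundedContinuousFunction L Y) t
                  - (G f d : BoundedContinuousFunction L Y) t)
              + ((g : BoundedContinuousFunction L Y) t
                  - (G g d : BoundedContinuousFunction L Y) t)‖
            ≤ ‖-(((f+g : ↥E) : BoundedContinuousFunction L Y) t
                  - (G (f+g) d : BoundedContinuousFunction L Y) t)
              + ((f : BoundedContinuousFunction L Y) t
                  - (G f d : BoundedContinuousFunction L Y) t)‖
              + ‖(g : BoundedContinuousFunction L Y) t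
                  - (G g d : BoundedContinuousFunction L Y) t‖ := norm_add_le _ _
          _ ≤ ‖-(((f+g : ↥E) : BoundedContinuousFunction L Y) t
                  - (G (f+g) d : BoundedContinuousFunction L Y) t)‖
              + ‖(f : BoundedContinuousFunction L Y) t
                  - (G f d : BoundedContinuousFunction L Y) t‖
              + ‖(g : BoundedContinuousFunction L Y) t
                  - (G g d : BoundedContinuousFunction L Y) t‖ := by
                have := norm_add_le (-(((f+g : ↥E) : BoundedContinuousFunction L Y) t
                  - (G (f+g) d : BoundedContinuousFunction L Y) t))
                  ((f : BoundedContinuousFunction L Y) t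
                  - (G f d : BoundedContinuousFunction L Y) t)
                linarith
          _ ≤ 1/((d.2:ℝ)+1) + 1/((d.2:ℝ)+1) + 1/((d.2:ℝ)+1) := by
                rw [norm_neg]
                gcongr
    have h1 : Tendsto (fun d => φ (G (f+g) d)) atTop (𝓝 (Pf φ f + Pf φ g + 0)) := by
      have heq : (fun d => φ (G (f+g) d))
          = fun d => φ (G f d) + φ (G g d) + φ (G (f+g) d - G f d - G g d) := by
        funext d; rw [map_sub, map_sub]; ring
      rw [heq]
      exact ((hPf φ f).add (hPf φ g)).add h0
    rw [add_zero] at h1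
    exact tendsto_nhds_unique (hPf φ (f+g)) h1
  -- F3 : homogeneity in f
  have F3 : ∀ (φ : ↥E →L[ℝ] ℝ) (a : ℝ) (f : ↥E), Pf φ (a • f) = a * Pf φ f := by
    intro φ a f
    have h0 : Tendsto (fun d => φ (G (a • f) d - a • G f d)) atTop (𝓝 0) := by
      refine key φ _ (‖a • f‖ + |a| * ‖f‖) (1 + |a|) (by positivity) ?_ ?_ ?_
      · intro d
        have hc : ((G (a • f) d - a • G f d : ↥E) : BoundedContinuousFunction L Y)
            = (G (a • f) d : BoundedContinuousFunction L Y)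
              - a • (G f d : BoundedContinuousFunction L Y) := rfl
        rw [hc]
        exact zai_sub (hGz _ _) (zai_smul a (hGz f d))
      · intro d
        have h1 := hGn (a • f) d; have h2 := hGn f d
        have e1 := norm_sub_le (G (a • f) d) (a • G f d)
        have e2 : ‖a • G f d‖ = |a| * ‖G f d‖ := norm_smul a (G f d)
        have e3 : |a| * ‖G f d‖ ≤ |a| * ‖f‖ := mul_le_mul_of_nonneg_left h2 (abs_nonneg a)
        linarith
      · intro d t ht
        have hc : ((G (a • f) d - a • G f d : ↥E) : BoundedContinuousFunction L Y) t
            = -(((a • f : ↥E) : BoundedContinuousFunction L Y) t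
                  - (G (a • f) d : BoundedContinuousFunction L Y) t)
              + a • ((f : BoundedContinuousFunction L Y) t
                  - (G f d : BoundedContinuousFunction L Y) t) := by
          have h1 : ((a • f : ↥E) : BoundedContinuousFunction L Y) t
              = a • (f : BoundedContinuousFunction L Y) t := rfl
          have h2 : ((G (a • f) d - a • G f d : ↥E) : BoundedContinuousFunction L Y) t
              = (G (a • f) d : BoundedContinuousFunction L Y) t
                - a • (G f d : BoundedContinuousFunction L Y) t := rfl
          rw [h2, h1, smul_sub]
          abel
        rw [hc]
        have e1 := hGa (a • f) d t ht
        have e2 := hGa f d t ht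
        have harith : 1*(1+|a|)/((d.2:ℝ)+1) = 1/((d.2:ℝ)+1) + |a| * (1/((d.2:ℝ)+1)) := by
          ring
        rw [harith]
        calc ‖-(((a • f : ↥E) : BoundedContinuousFunction L Y) t
                  - (G (a • f) d : BoundedContinuousFunction L Y) t)
              + a • ((f : BoundedContinuousFunction L Y) t
                  - (G f d : BoundedContinuousFunction L Y) t)‖
            ≤ ‖-(((a • f : ↥E) : BoundedContinuousFunction L Y) t
                  - (G (a • f) d : BoundedContinuousFunction L Y) t)‖
              + ‖a • ((f : BoundedContinuousFunction L Y) t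
                  - (G f d : BoundedContinuousFunction L Y) t)‖ := norm_add_le _ _
          _ ≤ 1/((d.2:ℝ)+1) + |a| * (1/((d.2:ℝ)+1)) := by
              rw [norm_neg, norm_smul, Real.norm_eq_abs]
              have := mul_le_mul_of_nonneg_left e2 (abs_nonneg a)
              gcongr
    have h1 : Tendsto (fun d => φ (G (a • f) d)) atTop (𝓝 (a * Pf φ f + 0)) := by
      have heq : (fun d => φ (G (a • f) d))
          = fun d => a * φ (G f d) + φ (G (a • f) d - a • G f d) := by
        funext d
        rw [map_sub, map_smul, smul_eq_mul]
        ring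
      rw [heq]
      exact ((hPf φ f).const_mul a).add h0
    rw [add_zero] at h1
    exact tendsto_nhds_unique (hPf φ (a • f)) h1
  -- F4 : bound
  have F4 : ∀ (φ : ↥E →L[ℝ] ℝ) (f : ↥E), |Pf φ f| ≤ ‖φ‖ * ‖f‖ := by
    intro φ f
    refine le_of_tendsto' (hPf φ f).abs fun d => ?_
    have h1 : |φ (G f d)| ≤ ‖φ‖ * ‖G f d‖ := by
      have := φ.le_opNorm (G f d)
      rwa [Real.norm_eq_abs] at this
    calc |φ (G f d)| ≤ ‖φ‖ * ‖G f d‖ := h1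
      _ ≤ ‖φ‖ * ‖f‖ := mul_le_mul_of_nonneg_left (hGn f d) (norm_nonneg φ)
  -- F5 : linearity in φ
  have F5a : ∀ (φ ψ : ↥E →L[ℝ] ℝ) (f : ↥E), Pf (φ + ψ) f = Pf φ f + Pf ψ f := by
    intro φ ψ f
    have h1 : Tendsto (fun d => (φ + ψ) (G f d)) atTop (𝓝 (Pf φ f + Pf ψ f)) := by
      have heq : (fun d => (φ + ψ) (G f d)) = fun d => φ (G f d) + ψ (G f d) := by
        funext d; rw [ContinuousLinearMap.add_apply]
      rw [heq]
      exact (hPf φ f).add (hPf ψ f)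
    exact tendsto_nhds_unique (hPf (φ + ψ) f) h1
  have F5s : ∀ (a : ℝ) (φ : ↥E →L[ℝ] ℝ) (f : ↥E), Pf (a • φ) f = a * Pf φ f := by
    intro a φ f
    have h1 : Tendsto (fun d => (a • φ) (G f d)) atTop (𝓝 (a * Pf φ f)) := by
      have heq : (fun d => (a • φ) (G f d)) = fun d => a * φ (G f d) := by
        funext d; rw [ContinuousLinearMap.smul_apply, smul_eq_mul]
      rw [heq]
      exact (hPf φ f).const_mul a
    exact tendsto_nhds_unique (hPf (a • φ) f) h1
  -- package
  set Plin : (↥E →L[ℝ] ℝ) → (↥E →L[ℝ] ℝ) := fun φ =>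
    LinearMap.mkContinuous
      { toFun := Pf φ
        map_add' := F2 φ
        map_smul' := by
          intro a f
          simp only [RingHom.id_apply, smul_eq_mul]
          exact F3 φ a f }
      ‖φ‖ (fun f => by rw [Real.norm_eq_abs]; exact F4 φ f) with hPlindef
  have hPlin_apply : ∀ (φ : ↥E →L[ℝ] ℝ) (f : ↥E), Plin φ f = Pf φ f := fun φ f => rfl
  have hPlin_norm : ∀ φ : ↥E →L[ℝ] ℝ, ‖Plin φ‖ ≤ ‖φ‖ := fun φ =>
    LinearMap.mkContinuous_norm_le _ (norm_nonneg φ) _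
  set P : (↥E →L[ℝ] ℝ) →L[ℝ] (↥E →L[ℝ] ℝ) :=
    LinearMap.mkContinuous
      { toFun := Plin
        map_add' := fun φ ψ => ContinuousLinearMap.ext fun f => by
          rw [hPlin_apply, ContinuousLinearMap.add_apply, hPlin_apply, hPlin_apply]
          exact F5a φ ψ f
        map_smul' := fun a φ => ContinuousLinearMap.ext fun f => by
          rw [hPlin_apply, RingHom.id_apply, ContinuousLinearMap.smul_apply, hPlin_apply,
            smul_eq_mul]
          exact F5s a φ f }
      1 (fun φ => by rw [one_mul]; exact hPlin_norm φ) with hPdef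
  have hP_apply : ∀ φ : ↥E →L[ℝ] ℝ, P φ = Plin φ := fun φ => rfl
  refine ⟨P, ?_, ?_, ?_⟩
  · -- idempotent
    intro φ
    rw [hP_apply, hP_apply]
    refine ContinuousLinearMap.ext fun f => ?_
    rw [hPlin_apply, hPlin_apply]
    have h1 : (fun d => (Plin φ) (G f d)) = fun d => φ (G f d) := by
      funext d
      rw [hPlin_apply]
      exact F1 φ (G f d) (hGz f d)
    exact tendsto_nhds_unique (hPf (Plin φ) f) (h1 ▸ hPf φ f)
  · -- kernel characterization
    intro φ
    constructor
    · intro h0 y hy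
      have h1 : Pf φ y = φ y := F1 φ y hy
      have h2 : (P φ) y = 0 := by rw [h0]; rfl
      rw [hP_apply, hPlin_apply, h1] at h2
      exact h2
    · intro h0
      rw [hP_apply]
      refine ContinuousLinearMap.ext fun f => ?_
      rw [hPlin_apply]
      have h1 : (fun d => φ (G f d)) = fun _ => (0:ℝ) := by
        funext d
        exact h0 (G f d) (hGz f d)
      have h2 := hPf φ f
      rw [h1] at h2
      have h3 : Pf φ f = 0 := tendsto_nhds_unique h2 tendsto_const_nhds
      rw [h3]
      rfl
  · -- norm identity
    intro φ
    have norming : ∀ (ψ : ↥E →L[ℝ] ℝ) (r : ℝ), r < ‖ψ‖ → ∃ x : ↥E, ‖x‖ ≤ 1 ∧ r < ψ x := by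
      intro ψ r hr
      obtain ⟨x, hx1, hx2⟩ := ψ.exists_lt_apply_of_lt_opNorm hr
      by_cases hs : 0 ≤ ψ x
      · exact ⟨x, hx1.le, by rwa [Real.norm_eq_abs, abs_of_nonneg hs] at hx2⟩
      · refine ⟨-x, by rw [norm_neg]; exact hx1.le, ?_⟩
        rw [map_neg]
        rwa [Real.norm_eq_abs, abs_of_neg (not_le.mp hs)] at hx2
    refine le_antisymm ?_ ?_
    · have h2 : ‖φ‖ ≤ ‖Plin φ‖ + ‖φ - Plin φ‖ := by
        have h1 : Plin φ + (φ - Plin φ) = φ := by abel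
        have h3 := norm_add_le (Plin φ) (φ - Plin φ)
        rwa [h1] at h3
      calc ‖φ‖ ≤ ‖Plin φ‖ + ‖φ - Plin φ‖ := h2
        _ = ‖P φ‖ + ‖φ - P φ‖ := by rw [hP_apply]
    · rw [hP_apply]
      refine le_of_forall_pos_le_add fun η hη => ?_
      have hφ2 : (0:ℝ) < 2*‖φ‖+2 := by positivity
      set ε : ℝ := η/(2*‖φ‖+2) with hεdef
      have hε : 0 < ε := by positivity
      -- norming element for Plin φ inside E₀
      obtain ⟨x, hx1, hx2⟩ := norming (Plin φ) (‖Plin φ‖ - ε) (by linarith)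
      rw [hPlin_apply] at hx2
      have hev1 : ∀ᶠ d in (atTop : Filter (Compacts L × ℕ)),
          ‖Plin φ‖ - ε < φ (G x d) := Filter.Tendsto.eventually_const_lt hx2 (hPf φ x)
      obtain ⟨d₀, hd₀⟩ := hev1.exists
      set g : ↥E := G x d₀ with hgdef
      have hgz : ZeroAtInfty (g : BoundedContinuousFunction L Y) := hGz x d₀
      have hg1 : ‖g‖ ≤ 1 := le_trans (hGn x d₀) hx1
      have hgφ : ‖Plin φ‖ - ε < φ g := hd₀
      -- norming element for φ - Plin φ
      obtain ⟨f₂, hf₂1, hf₂φ⟩ := norming (φ - Plin φ) (‖φ - Plin φ‖ - ε) (by linarith)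
      -- the limit
      have hT : Tendsto (fun d => φ (g + (f₂ - G f₂ d))) atTop
          (𝓝 (φ g + (φ f₂ - Pf φ f₂))) := by
        have heq : (fun d => φ (g + (f₂ - G f₂ d)))
            = fun d => φ g + (φ f₂ - φ (G f₂ d)) := by
          funext d; rw [map_add, map_sub]
        rw [heq]
        exact tendsto_const_nhds.add (tendsto_const_nhds.sub (hPf φ f₂))
      -- eventual norm bound
      set Kg : Compacts L := ⟨{t | ε ≤ ‖(g : BoundedContinuousFunction L Y) t‖}, hgz ε hε⟩
        with hKgdef
      obtain ⟨n₁, hn₁⟩ := hsmalldiv (le_of_lt one_pos) hε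
      have hn₁' : ∀ n : ℕ, n₁ ≤ n → 1/((n:ℝ)+1) ≤ ε := hn₁
      have hev : ∀ d : Compacts L × ℕ, (Kg, n₁) ≤ d →
          φ (g + (f₂ - G f₂ d)) ≤ ‖φ‖ * (1 + 2*ε) := by
        intro d hd
        have hd2 : 1/((d.2:ℝ)+1) ≤ ε := hn₁' d.2 hd.2
        have hwnorm : ‖g + (f₂ - G f₂ d)‖ ≤ 1 + 2*ε := by
          rw [← Submodule.norm_coe]
          have hcoe : ((g + (f₂ - G f₂ d) : ↥E) : BoundedContinuousFunction L Y)
              = (g : BoundedContinuousFunction L Y)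
                + ((f₂ : BoundedContinuousFunction L Y)
                  - (G f₂ d : BoundedContinuousFunction L Y)) := rfl
          rw [hcoe, norm_le (by linarith)]
          intro t
          have happ : ((g : BoundedContinuousFunction L Y)
                + ((f₂ : BoundedContinuousFunction L Y)
                  - (G f₂ d : BoundedContinuousFunction L Y))) t
              = (g : BoundedContinuousFunction L Y) t
                + ((f₂ : BoundedContinuousFunction L Y) t
                  - (G f₂ d : BoundedContinuousFunction L Y) t) := rfl
          rw [happ]
          by_cases ht : t ∈ (d.1 : Compacts L).1
          · have e1 : ‖(f₂ : BoundedContinuousFunction L Y) t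
                - (G f₂ d : BoundedContinuousFunction L Y) t‖ ≤ 1/(d.2+1) := hGa f₂ d t ht
            have e2 : ‖(g : BoundedContinuousFunction L Y) t‖ ≤ 1 := by
              refine le_trans (norm_coe_le_norm _ t) ?_
              rw [Submodule.norm_coe]; exact hg1
            calc ‖(g : BoundedContinuousFunction L Y) t
                  + ((f₂ : BoundedContinuousFunction L Y) t
                    - (G f₂ d : BoundedContinuousFunction L Y) t)‖
                ≤ ‖(g : BoundedContinuousFunction L Y) t‖
                  + ‖(f₂ : BoundedContinuousFunction L Y) t
                    - (G f₂ d : BoundedContinuousFunction L Y) t‖ := norm_add_le _ _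
              _ ≤ 1 + 2*ε := by linarith
          · have htg : t ∉ Kg.1 := fun hc => ht (hd.1 hc)
            have e2 : ‖(g : BoundedContinuousFunction L Y) t‖ ≤ ε := by
              by_contra hc
              push_neg at hc
              exact htg hc.le
            have e1 : ‖(f₂ : BoundedContinuousFunction L Y) t
                - (G f₂ d : BoundedContinuousFunction L Y) t‖ ≤ ‖f₂‖ + 1/(d.2+1) := by
              have hcd : (f₂ : BoundedContinuousFunction L Y) t
                  - (G f₂ d : BoundedContinuousFunction L Y) t
                  = ((f₂ : BoundedContinuousFunction L Y)
                    - (G f₂ d : BoundedContinuousFunction L Y)) t := rfl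
              rw [hcd]
              exact le_trans (norm_coe_le_norm _ t) (hGg f₂ d)
            calc ‖(g : BoundedContinuousFunction L Y) t
                  + ((f₂ : BoundedContinuousFunction L Y) t
                    - (G f₂ d : BoundedContinuousFunction L Y) t)‖
                ≤ ‖(g : BoundedContinuousFunction L Y) t‖
                  + ‖(f₂ : BoundedContinuousFunction L Y) t
                    - (G f₂ d : BoundedContinuousFunction L Y) t‖ := norm_add_le _ _
              _ ≤ ε + (‖f₂‖ + 1/(d.2+1)) := by linarith
              _ ≤ 1 + 2*ε := by linarith
        calc φ (g + (f₂ - G f₂ d)) ≤ |φ (g + (f₂ - G f₂ d))| := le_abs_self _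
          _ ≤ ‖φ‖ * ‖g + (f₂ - G f₂ d)‖ := by
              have := φ.le_opNorm (g + (f₂ - G f₂ d))
              rwa [Real.norm_eq_abs] at this
          _ ≤ ‖φ‖ * (1 + 2*ε) := mul_le_mul_of_nonneg_left hwnorm (norm_nonneg φ)
      have hlim_le : φ g + (φ f₂ - Pf φ f₂) ≤ ‖φ‖ * (1 + 2*ε) :=
        le_of_tendsto hT (eventually_atTop.mpr ⟨(Kg, n₁), hev⟩)
      have hc2 : ‖φ - Plin φ‖ - ε < φ f₂ - Pf φ f₂ := by
        have hsa : (φ - Plin φ) f₂ = φ f₂ - Pf φ f₂ := by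
          rw [ContinuousLinearMap.sub_apply, hPlin_apply]
        rwa [hsa] at hf₂φ
      have hεη : 2*ε*‖φ‖ + 2*ε = η := by
        rw [hεdef]
        field_simp
      nlinarith [hlim_le, hgφ, hc2]
  done

end MIdealProof

/-- If the closed unit ball of `E₀ = E ∩ C₀(L,Y)` is dense in the closed unit ball of `E`
for the topology of uniform convergence on compact subsets of `L`, then `E₀` is an
M-ideal in `E`. -/
theorem isMIdeal_of_denseUnifOnCompacts {L Y : Type*}
    [TopologicalSpace L] [LocallyCompactSpace L] [T2Space L]
    [NormedAddCommGroup Y] [NormedSpace ℝ Y] [CompleteSpace Y]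
    (E : Submodule ℝ (BoundedContinuousFunction L Y))
    (hE : IsClosed (E : Set (BoundedContinuousFunction L Y)))
    (hdense : ∀ f ∈ E, ‖f‖ ≤ 1 → ∀ K : Set L, IsCompact K → ∀ ε > (0 : ℝ),
      ∃ g ∈ E, ZeroAtInfty g ∧ ‖g‖ ≤ 1 ∧ ∀ t ∈ K, ‖f t - g t‖ ≤ ε) :
    IsMIdeal {f : ↥E | ZeroAtInfty (f : BoundedContinuousFunction L Y)} := by
  exact MIdealProof.main hdense
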